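/- Fix a real α > 1 and an integer m ≥ 1, and let the instance be agreeable (for any two jobs, r_j ≤ r_{j'} implies d_j ≤ d_{j'}). Then for every feasible preemptive-no-migration schedule S on m processors there exists a feasible non-preemptive schedule on m processors in which every job j has processing time p_j equal to its total execution time in S; in particular this non-preemptive schedule has the same energy as S, and the minimum non-preemptive energy equals the minimum preemptive-no-migration energy for agreeable instances. -/

import Mathlib

/-- A feasible non-preemptive schedule on `m` identical speed-scalable processors:
each job `j` is assigned a processor `proc j`, a start time `start j ≥ r j` and a
processing time `len j > 0` with `start j + len j ≤ d j`, and the open execution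
intervals of distinct jobs on the same processor are pairwise disjoint. -/
structure NPSchedule (ι : Type) [Fintype ι] (m : ℕ) (w r d : ι → ℝ) where
  proc : ι → Fin m
  start : ι → ℝ
  len : ι → ℝ
  len_pos : ∀ j, 0 < len j
  start_ge : ∀ j, r j ≤ start j
  end_le : ∀ j, start j + len j ≤ d j
  disjoint_jobs : ∀ j j', j ≠ j' → proc j = proc j' →
    Disjoint (Set.Ioo (start j) (start j + len j)) (Set.Ioo (start j') (start j' + len j'))

/-- The energy consumption of a non-preemptive schedule: job `j` runs at constant speed
`w j / len j` and consumes energy `w j * (w j / len j) ^ (α - 1)`. -/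
noncomputable def npEnergy {ι : Type} [Fintype ι] {m : ℕ} {w r d : ι → ℝ}
    (α : ℝ) (S : NPSchedule ι m w r d) : ℝ :=
  ∑ j, w j * (w j / S.len j) ^ (α - 1)

open MeasureTheory Set

/-- A feasible preemptive-no-migration schedule on `m` identical speed-scalable
processors: each job `j` gets a single processor `proc j`, a measurable set
`A j ⊆ [r j, d j]` of execution times (disjoint from those of other jobs on the same
processor) and a constant speed `speed j > 0` with `speed j · λ(A j) = w j`. -/
structure NoMigSchedule (ι : Type) [Fintype ι] (m : ℕ) (w r d : ι → ℝ) where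
  proc : ι → Fin m
  A : ι → Set ℝ
  speed : ι → ℝ
  speed_pos : ∀ j, 0 < speed j
  measurableSet_A : ∀ j, MeasurableSet (A j)
  A_subset : ∀ j, A j ⊆ Icc (r j) (d j)
  disjoint_jobs : ∀ j j', j ≠ j' → proc j = proc j' → Disjoint (A j) (A j')
  work_done : ∀ j, speed j * (volume (A j)).toReal = w j

/-- The energy consumption of a preemptive-no-migration schedule. -/
noncomputable def nmEnergy {ι : Type} [Fintype ι] {m : ℕ} {w r d : ι → ℝ}
    (α : ℝ) (S : NoMigSchedule ι m w r d) : ℝ :=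
  ∑ j, w j * S.speed j ^ (α - 1)

/-- For agreeable instances, preemption without migration gives no advantage over
non-preemptive scheduling: every feasible preemptive-no-migration schedule `S` can be
turned into a feasible non-preemptive schedule in which each job's processing time
equals its total execution time `λ(A j)` in `S` (hence with the same energy), and the
minimum non-preemptive energy equals the minimum preemptive-no-migration energy. -/

lemma sum_vol_le' {ι : Type} [Fintype ι] (A : ι → Set ℝ)
    (hA : ∀ i, MeasurableSet (A i)) (C : Finset ι) (a b : ℝ) (hab : a ≤ b)
    (hsub : ∀ i ∈ C, A i ⊆ Set.Icc a b)
    (hdisj : ∀ i ∈ C, ∀ j ∈ C, i ≠ j → Disjoint (A i) (A j)) :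
    ∑ i ∈ C, (volume (A i)).toReal ≤ b - a := by
  have hfin : ∀ i ∈ C, volume (A i) ≠ ⊤ := by
    intro i hi
    refine ne_top_of_le_ne_top ?_ (measure_mono (hsub i hi))
    simp [Real.volume_Icc]
  rw [← ENNReal.toReal_sum hfin]
  have h1 : ∑ i ∈ C, volume (A i) = volume (⋃ i ∈ C, A i) := by
    rw [measure_biUnion_finset ?_ (fun i _ => hA i)]
    exact fun i hi j hj hij => hdisj i hi j hj hij
  have h2 : volume (⋃ i ∈ C, A i) ≤ ENNReal.ofReal (b - a) := by
    calc volume (⋃ i ∈ C, A i) ≤ volume (Set.Icc a b) :=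
          measure_mono (Set.iUnion₂_subset hsub)
      _ = ENNReal.ofReal (b - a) := Real.volume_Icc
  calc (∑ i ∈ C, volume (A i)).toReal
      ≤ (ENNReal.ofReal (b - a)).toReal :=
        ENNReal.toReal_mono (by simp) (h1 ▸ h2)
    _ = b - a := ENNReal.toReal_ofReal (by linarith)


lemma exists_np (ι : Type) [Fintype ι]
    (m : ℕ) (w r d : ι → ℝ)
    (hw : ∀ j, 0 < w j) (hrd : ∀ j, r j < d j)
    (hagree : ∀ j j', r j ≤ r j' → d j ≤ d j')
    (S : NoMigSchedule ι m w r d) :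
    ∃ Snpr : NPSchedule ι m w r d,
      Snpr.proc = S.proc ∧ ∀ j, Snpr.len j = (volume (S.A j)).toReal := by
  have main : ∃ proc : ι → Fin m, ∃ σ : ι → ℝ, ∃ p : ι → ℝ,
      proc = S.proc ∧ (∀ j, p j = (volume (S.A j)).toReal) ∧
      (∀ j, 0 < p j) ∧ (∀ j, r j ≤ σ j) ∧ (∀ j, σ j + p j ≤ d j) ∧
      (∀ j j', j ≠ j' → proc j = proc j' →
        Disjoint (Set.Ioo (σ j) (σ j + p j)) (Set.Ioo (σ j') (σ j' + p j'))) := by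
      classical
      set p : ι → ℝ := fun j => (volume (S.A j)).toReal with hpdef
      have hp_nonneg : ∀ j, 0 ≤ p j := fun j => ENNReal.toReal_nonneg
      have hp_pos : ∀ j, 0 < p j := by
        intro j
        rcases lt_or_eq_of_le (hp_nonneg j) with h | h
        · exact h
        · exfalso
          have hwj := S.work_done j
          have := hw j
          rw [← hwj] at this
          have hz : (volume (S.A j)).toReal = 0 := h.symm
          rw [hz, mul_zero] at this
          exact lt_irrefl 0 this
      set e : ι ≃ Fin (Fintype.card ι) := Fintype.equivFin ι with he
      set key : ι → ℝ ×ₗ ℕ := fun j => toLex (r j, (e j : ℕ)) with hkey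
      have key_inj : Function.Injective key := by
        intro a b hab
        have : (r a, ((e a : Fin _) : ℕ)) = (r b, ((e b : Fin _) : ℕ)) := by
          simpa [hkey] using congrArg ofLex hab
        have h2 : ((e a : Fin _) : ℕ) = ((e b : Fin _) : ℕ) := congrArg Prod.snd this
        exact e.injective (Fin.val_injective h2)
      have key_r : ∀ {a b : ι}, key a ≤ key b → r a ≤ r b := by
        intro a b hab
        rcases Prod.Lex.le_iff.1 hab with h | h
        · exact le_of_lt h
        · exact le_of_eq h.1
      set B : ι → ι → Finset ι := fun t j =>
        Finset.univ.filter (fun i => key t ≤ key i ∧ key i < key j ∧ S.proc i = S.proc j)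
        with hB
      set T : ι → Finset ι := fun j =>
        Finset.univ.filter (fun t => key t ≤ key j ∧ S.proc t = S.proc j) with hT
      have hTmem : ∀ j, j ∈ T j := by intro j; simp [hT]
      have hTne : ∀ j, (T j).Nonempty := fun j => ⟨j, hTmem j⟩
      set f : ι → ι → ℝ := fun j t => r t + ∑ i ∈ B t j, p i with hf
      set σ : ι → ℝ := fun j => (T j).sup' (hTne j) (f j) with hσ
      have hstart : ∀ j, r j ≤ σ j := by
        intro j
        have : f j j ≤ σ j := Finset.le_sup' (f j) (hTmem j)
        have hsum : (0:ℝ) ≤ ∑ i ∈ B j j, p i :=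
          Finset.sum_nonneg fun i _ => hp_nonneg i
        simp only [hf] at this
        linarith
      -- key deadline bound
      have hend : ∀ j, σ j + p j ≤ d j := by
        intro j
        have : σ j ≤ d j - p j := by
          apply Finset.sup'_le
          intro t ht
          simp only [hT, Finset.mem_filter] at ht
          obtain ⟨-, htj, htp⟩ := ht
          have hjB : j ∉ B t j := by simp [hB]
          have hsum : ∑ i ∈ insert j (B t j), p i = p j + ∑ i ∈ B t j, p i :=
            Finset.sum_insert hjB
          have hbound : ∑ i ∈ insert j (B t j), p i ≤ d j - r t := by
            apply sum_vol_le' S.A S.measurableSet_A _ (r t) (d j)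
              (le_of_lt (lt_of_le_of_lt (key_r htj) (hrd j)))
            · intro i hi
              rcases Finset.mem_insert.1 hi with h | h
              · subst h
                exact (S.A_subset i).trans (Set.Icc_subset_Icc (key_r htj) le_rfl)
              · simp only [hB, Finset.mem_filter] at h
                obtain ⟨-, hti, hij, -⟩ := h
                exact (S.A_subset i).trans
                  (Set.Icc_subset_Icc (key_r hti) (hagree i j (key_r (le_of_lt hij))))
            · intro i hi i' hi' hne
              have hpr : ∀ x ∈ insert j (B t j), S.proc x = S.proc j := by
                intro x hx
                rcases Finset.mem_insert.1 hx with h | h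
                · subst h; rfl
                · simp only [hB, Finset.mem_filter] at h; exact h.2.2.2
              exact S.disjoint_jobs i i' hne ((hpr i hi).trans (hpr i' hi').symm)
          simp only [hf]
          linarith
        linarith
      -- ordering
      have hchain : ∀ j j', key j < key j' → S.proc j = S.proc j' → σ j + p j ≤ σ j' := by
        intro j j' hlt hproc
        have : σ j ≤ σ j' - p j := by
          apply Finset.sup'_le
          intro t ht
          simp only [hT, Finset.mem_filter] at ht
          obtain ⟨-, htj, htp⟩ := ht
          have ht' : t ∈ T j' := by
            simp only [hT, Finset.mem_filter]
            exact ⟨Finset.mem_univ t, htj.trans (le_of_lt hlt), htp.trans hproc⟩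
          have hsub : insert j (B t j) ⊆ B t j' := by
            intro i hi
            rcases Finset.mem_insert.1 hi with h | h
            · subst h
              simp only [hB, Finset.mem_filter]
              exact ⟨Finset.mem_univ i, htj, hlt, hproc⟩
            · simp only [hB, Finset.mem_filter] at h ⊢
              exact ⟨Finset.mem_univ i, h.2.1, h.2.2.1.trans hlt, h.2.2.2.trans hproc⟩
          have hjB : j ∉ B t j := by simp [hB]
          have hsum : p j + ∑ i ∈ B t j, p i = ∑ i ∈ insert j (B t j), p i :=
            (Finset.sum_insert hjB).symm
          have hle : ∑ i ∈ insert j (B t j), p i ≤ ∑ i ∈ B t j', p i :=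
            Finset.sum_le_sum_of_subset_of_nonneg hsub (fun i _ _ => hp_nonneg i)
          have hfs : f j' t ≤ σ j' := Finset.le_sup' (f j') ht'
          simp only [hf] at hfs ⊢
          linarith
        linarith
      refine ⟨S.proc, σ, p, rfl, fun j => rfl, hp_pos, hstart, hend, ?_⟩
      intro j j' hne hproc
      rcases lt_trichotomy (key j) (key j') with h | h | h
      · have := hchain j j' h hproc
        rw [Set.disjoint_left]
        intro x hx hx'
        exact absurd (hx.2.trans_le (this.trans (le_of_lt hx'.1))) (lt_irrefl x)
      · exact absurd (key_inj h) hne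
      · have := hchain j' j h hproc.symm
        rw [Set.disjoint_left]
        intro x hx hx'
        exact absurd (hx'.2.trans_le (this.trans (le_of_lt hx.1))) (lt_irrefl x)

  obtain ⟨proc, σ, p, hproc, hlen, hpos, hge, hle, hdisj⟩ := main
  exact ⟨⟨proc, σ, p, hpos, hge, hle, hdisj⟩, hproc, hlen⟩

theorem agreeable_no_migration_eq_nonpreemptive (ι : Type) [Fintype ι]
    (α : ℝ) (hα : 1 < α) (m : ℕ) (hm : 1 ≤ m) (w r d : ι → ℝ)
    (hw : ∀ j, 0 < w j) (hr : ∀ j, 0 ≤ r j) (hrd : ∀ j, r j < d j)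
    (hagree : ∀ j j', r j ≤ r j' → d j ≤ d j') :
    (∀ S : NoMigSchedule ι m w r d,
      ∃ Snpr : NPSchedule ι m w r d,
        (∀ j, Snpr.len j = (volume (S.A j)).toReal) ∧
        npEnergy α Snpr = nmEnergy α S) ∧
    sInf {E | ∃ Snpr : NPSchedule ι m w r d, npEnergy α Snpr = E} =
      sInf {E | ∃ S : NoMigSchedule ι m w r d, nmEnergy α S = E} := by
  have npart : ∀ S : NoMigSchedule ι m w r d,
      ∃ Snpr : NPSchedule ι m w r d,
        (∀ j, Snpr.len j = (volume (S.A j)).toReal) ∧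
        npEnergy α Snpr = nmEnergy α S := by
    intro S
    obtain ⟨Snpr, hproc, hlen⟩ := exists_np ι m w r d hw hrd hagree S
    refine ⟨Snpr, hlen, ?_⟩
    unfold npEnergy nmEnergy
    apply Finset.sum_congr rfl
    intro j _
    have hplen : Snpr.len j = (volume (S.A j)).toReal := hlen j
    have hwj : S.speed j * Snpr.len j = w j := by rw [hplen]; exact S.work_done j
    have hlpos : (0:ℝ) < Snpr.len j := Snpr.len_pos j
    have : w j / Snpr.len j = S.speed j := by
      rw [← hwj]
      field_simp
    rw [this]
  refine ⟨npart, ?_⟩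
  congr 1
  ext E
  constructor
  · rintro ⟨Snpr, rfl⟩
    refine ⟨⟨Snpr.proc, fun j => Set.Ioo (Snpr.start j) (Snpr.start j + Snpr.len j),
      fun j => w j / Snpr.len j,
      fun j => div_pos (hw j) (Snpr.len_pos j),
      fun j => measurableSet_Ioo,
      fun j => ?_, Snpr.disjoint_jobs, fun j => ?_⟩, ?_⟩
    · intro x hx
      exact ⟨(Snpr.start_ge j).trans (le_of_lt hx.1),
        (le_of_lt hx.2).trans (Snpr.end_le j)⟩
    · have hv : (volume (Set.Ioo (Snpr.start j) (Snpr.start j + Snpr.len j))).toReal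
          = Snpr.len j := by
        rw [Real.volume_Ioo]
        rw [show Snpr.start j + Snpr.len j - Snpr.start j = Snpr.len j by ring]
        exact ENNReal.toReal_ofReal (le_of_lt (Snpr.len_pos j))
      rw [hv]
      exact div_mul_cancel₀ (w j) (ne_of_gt (Snpr.len_pos j))
    · rfl
  · rintro ⟨S, rfl⟩
    obtain ⟨Snpr, hlen, hE⟩ := npart S
    exact ⟨Snpr, hE⟩
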